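/- For every integer M with 4 ≤ M ≤ 10, every positive integer k, and every complex number s with q_M·k + (M+1)·log 3 ≤ Re(s) ≤ q_{M−1}·k − M·log 3, the k-th derivative of the Riemann zeta function does not vanish at s, i.e. iteratedDeriv k riemannZeta s ≠ 0. -/

import Mathlib

open Real LSeries Finset

/-- `q M = log(log M / log(M+1)) / log(M/(M+1))`, the slope of the `M`-th critical line. -/
noncomputable def q (M : ℕ) : ℝ :=
  Real.log (Real.log M / Real.log ((M : ℝ) + 1)) / Real.log ((M : ℝ) / ((M : ℝ) + 1))

private lemma log3_gt : (13:ℝ)/12 < Real.log 3 := by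
  have he : Real.exp 1 ≤ 2.7182818286 := Real.exp_one_lt_d9.le
  have h13 : Real.exp 13 < 531441 := by
    have h : Real.exp 13 = Real.exp 1 ^ (13:ℕ) := by
      rw [← Real.exp_nat_mul]; norm_num
    rw [h]
    calc Real.exp 1 ^ (13:ℕ) ≤ 2.7182818286 ^ (13:ℕ) :=
          pow_le_pow_left₀ (Real.exp_pos 1).le he 13
      _ < 531441 := by norm_num
  have h531 : (13:ℝ) < Real.log 531441 := by
    rw [← Real.exp_lt_exp, Real.exp_log (by norm_num : (0:ℝ) < 531441)]
    exact h13
  have hlog : Real.log 531441 = 12 * Real.log 3 := by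
    rw [show (531441:ℝ) = 3 ^ (12:ℕ) by norm_num, Real.log_pow]; norm_num
  rw [hlog] at h531
  linarith

private lemma rpow_ratio_le {x b : ℝ} (p qn : ℕ) (hqn : qn ≠ 0) (hx : 0 ≤ x) (hb : 0 ≤ b)
    (h : x ^ p ≤ b ^ qn) : x ^ ((p:ℝ)/(qn:ℝ)) ≤ b := by
  have h1 : x ^ ((p:ℝ)/(qn:ℝ)) = (x ^ p) ^ ((qn:ℝ)⁻¹) := by
    rw [← Real.rpow_natCast x p, ← Real.rpow_mul hx]
    congr 1
  rw [h1, ← Real.pow_rpow_inv_natCast hb hqn]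
  exact Real.rpow_le_rpow (pow_nonneg hx p) h (by positivity)

private lemma rpow_le_of_pow_le {x b e : ℝ} (p qn : ℕ) (hqn : qn ≠ 0) (hx : 0 ≤ x) (hb : 0 ≤ b)
    (he : e = (p:ℝ)/(qn:ℝ)) (h : x ^ p ≤ b ^ qn) : x ^ e ≤ b := by
  rw [he]; exact rpow_ratio_le p qn hqn hx hb h

private lemma slope_anti_left {x y a : ℝ} (hx : 0 < x) (hxy : x ≤ y) (hya : y < a) :
    (Real.log a - Real.log y) / (a - y) ≤ (Real.log a - Real.log x) / (a - x) := by
  rcases eq_or_lt_of_le hxy with rfl | hlt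
  · exact le_refl _
  · have h2 := strictConcaveOn_log_Ioi.secant_strict_mono (a := a)
      (x := x) (y := y) (Set.mem_Ioi.2 (hx.trans (hlt.trans hya)))
      (Set.mem_Ioi.2 hx) (Set.mem_Ioi.2 (hx.trans hlt)) (by linarith) (by linarith) hlt
    rw [show Real.log a - Real.log y = -(Real.log y - Real.log a) by ring,
        show a - y = -(y - a) by ring, neg_div_neg_eq,
        show Real.log a - Real.log x = -(Real.log x - Real.log a) by ring,
        show a - x = -(x - a) by ring, neg_div_neg_eq]
    exact h2.le

private lemma slope_anti_right {a y z : ℝ} (ha : 0 < a) (hay : a < y) (hyz : y ≤ z) :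
    (Real.log z - Real.log a) / (z - a) ≤ (Real.log y - Real.log a) / (y - a) := by
  rcases eq_or_lt_of_le hyz with rfl | hlt
  · exact le_refl _
  · exact (strictConcaveOn_log_Ioi.secant_strict_mono (a := a)
      (x := y) (y := z) (Set.mem_Ioi.2 ha) (Set.mem_Ioi.2 (ha.trans hay))
      (Set.mem_Ioi.2 (ha.trans (hay.trans hlt))) (by linarith) (by linarith) hlt).le

private lemma q_eq_slope (M : ℕ) (hM : 2 ≤ M) :
    q M = (Real.log (Real.log ((M:ℝ)+1)) - Real.log (Real.log M)) /
      (Real.log ((M:ℝ)+1) - Real.log M) := by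
  have hM0 : (0:ℝ) < M := by positivity
  have hM1 : (1:ℝ) < M := by exact_mod_cast hM
  have hlM : 0 < Real.log M := Real.log_pos hM1
  have hlM1 : 0 < Real.log ((M:ℝ)+1) := Real.log_pos (by linarith)
  unfold q
  rw [Real.log_div hlM.ne' hlM1.ne', Real.log_div hM0.ne' (by linarith)]
  rw [show Real.log (Real.log M) - Real.log (Real.log ((M:ℝ)+1))
      = -(Real.log (Real.log ((M:ℝ)+1)) - Real.log (Real.log M)) by ring,
    show Real.log M - Real.log ((M:ℝ)+1) = -(Real.log ((M:ℝ)+1) - Real.log M) by ring,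
    neg_div_neg_eq]

private lemma dom {n m k : ℕ} {σ c : ℝ} (hn : 2 ≤ n) (hm : 2 ≤ m)
    (h : σ * (Real.log m - Real.log n) ≤
      (k:ℝ) * (Real.log (Real.log m) - Real.log (Real.log n)) - c * (Real.log m - Real.log n)) :
    (Real.log n)^k / (n:ℝ) ^ σ ≤ ((Real.log m)^k / (m:ℝ) ^ σ) * ((n:ℝ)/m) ^ c := by
  have hn0 : (0:ℝ) < n := by positivity
  have hm0 : (0:ℝ) < m := by positivity
  have hln : 0 < Real.log n := Real.log_pos (by exact_mod_cast hn)
  have hlm : 0 < Real.log m := Real.log_pos (by exact_mod_cast hm)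
  have key : ∀ (j : ℕ), (0:ℝ) < j → 0 < Real.log j →
      (Real.log j)^k / (j:ℝ) ^ σ
        = Real.exp ((k:ℝ) * Real.log (Real.log j) - σ * Real.log j) := by
    intro j hj hlj
    rw [Real.exp_sub, ← Real.log_pow, Real.exp_log (by positivity),
      show σ * Real.log j = Real.log j * σ by ring, ← Real.rpow_def_of_pos hj]
  rw [key n hn0 hln, key m hm0 hlm,
    show ((n:ℝ)/m) ^ c = Real.exp (c * (Real.log n - Real.log m)) by
      rw [Real.rpow_def_of_pos (by positivity), Real.log_div hn0.ne' hm0.ne']; ring_nf,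
    ← Real.exp_add, Real.exp_le_exp]
  linarith

private lemma dom_left {M n k : ℕ} {σ : ℝ} (hM : 4 ≤ M) (hn2 : 2 ≤ n) (hnM : n < M)
    (hσ : σ ≤ q (M-1) * k - (M:ℝ) * Real.log 3) :
    (Real.log n)^k / (n:ℝ) ^ σ
      ≤ ((Real.log M)^k / (M:ℝ) ^ σ) * ((n:ℝ)/M) ^ (13*(M:ℝ)/12) := by
  have hn0 : (1:ℝ) < n := by exact_mod_cast hn2
  have hnM' : (n:ℝ) < M := by exact_mod_cast hnM
  have hln : 0 < Real.log n := Real.log_pos hn0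
  have hlnM : Real.log n < Real.log M := Real.log_lt_log (by linarith) hnM'
  have hD : 0 < Real.log M - Real.log n := by linarith
  -- rewrite q (M-1) as a slope
  have hq : q (M-1) = (Real.log (Real.log M) - Real.log (Real.log ((M:ℝ)-1))) /
      (Real.log M - Real.log ((M:ℝ)-1)) := by
    have h1 : ((M-1 : ℕ):ℝ) = (M:ℝ) - 1 := by
      have : (1:ℕ) ≤ M := by omega
      push_cast [Nat.cast_sub this]
      ring
    rw [q_eq_slope (M-1) (by omega), h1, show (M:ℝ) - 1 + 1 = (M:ℝ) by ring]
  -- slope comparison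
  have hs : q (M-1) ≤ (Real.log (Real.log M) - Real.log (Real.log n)) /
      (Real.log M - Real.log n) := by
    rw [hq]
    have hM1 : (n:ℝ) ≤ (M:ℝ) - 1 := by
      have : (n:ℕ) ≤ M - 1 := by omega
      have h2 : ((M-1:ℕ):ℝ) = (M:ℝ)-1 := by
        push_cast [Nat.cast_sub (show (1:ℕ) ≤ M by omega)]; ring
      calc (n:ℝ) ≤ ((M-1:ℕ):ℝ) := by exact_mod_cast this
        _ = (M:ℝ)-1 := h2
    exact slope_anti_left hln (Real.log_le_log (by linarith) hM1)
      (Real.log_lt_log (by linarith) (by linarith))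
  -- main inequality with true exponent
  have hmain : (Real.log n)^k / (n:ℝ) ^ σ
      ≤ ((Real.log M)^k / (M:ℝ) ^ σ) * ((n:ℝ)/M) ^ ((M:ℝ) * Real.log 3) := by
    apply dom hn2 (by omega)
    have h1 : σ ≤ ((Real.log (Real.log M) - Real.log (Real.log n)) /
        (Real.log M - Real.log n)) * k - (M:ℝ) * Real.log 3 := by
      have := mul_le_mul_of_nonneg_right hs (Nat.cast_nonneg k)
      linarith
    have h2 := mul_le_mul_of_nonneg_right h1 hD.le
    calc σ * (Real.log M - Real.log n) ≤
        (((Real.log (Real.log M) - Real.log (Real.log n)) / (Real.log M - Real.log n)) * k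
          - (M:ℝ) * Real.log 3) * (Real.log M - Real.log n) := h2
      _ = (k:ℝ) * (Real.log (Real.log M) - Real.log (Real.log n))
          - ((M:ℝ) * Real.log 3) * (Real.log M - Real.log n) := by
        field_simp
  refine hmain.trans (mul_le_mul_of_nonneg_left ?_ (by positivity))
  apply Real.rpow_le_rpow_of_exponent_ge (by positivity) (by
    rw [div_le_one (by positivity)]; linarith)
  have h3 := log3_gt
  have : (0:ℝ) ≤ M := by positivity
  nlinarith

private lemma dom_right {M n k : ℕ} {σ : ℝ} (hM : 4 ≤ M) (hMn : M < n)
    (hσ : q M * k + ((M:ℝ)+1) * Real.log 3 ≤ σ) :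
    (Real.log n)^k / (n:ℝ) ^ σ
      ≤ ((Real.log M)^k / (M:ℝ) ^ σ) * ((M:ℝ)/n) ^ (13*((M:ℝ)+1)/12) := by
  have hM0 : (1:ℝ) < M := by exact_mod_cast (by omega : 1 < M)
  have hMn' : (M:ℝ) < n := by exact_mod_cast hMn
  have hlM : 0 < Real.log M := Real.log_pos hM0
  have hlMn : Real.log M < Real.log n := Real.log_lt_log (by linarith) hMn'
  have hD : 0 < Real.log n - Real.log M := by linarith
  have hq : q M = (Real.log (Real.log ((M:ℝ)+1)) - Real.log (Real.log M)) /
      (Real.log ((M:ℝ)+1) - Real.log M) := q_eq_slope M (by omega)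
  have hs : (Real.log (Real.log n) - Real.log (Real.log M)) /
      (Real.log n - Real.log M) ≤ q M := by
    rw [hq]
    have hMn1 : (M:ℝ)+1 ≤ (n:ℝ) := by exact_mod_cast (by omega : M + 1 ≤ n)
    exact slope_anti_right hlM (Real.log_lt_log (by linarith) (by linarith))
      (Real.log_le_log (by linarith) hMn1)
  have hmain : (Real.log n)^k / (n:ℝ) ^ σ
      ≤ ((Real.log M)^k / (M:ℝ) ^ σ) * ((n:ℝ)/M) ^ (-(((M:ℝ)+1) * Real.log 3)) := by
    apply dom (by omega) (by omega)
    have h1 : ((Real.log (Real.log n) - Real.log (Real.log M)) /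
        (Real.log n - Real.log M)) * k + ((M:ℝ)+1) * Real.log 3 ≤ σ := by
      have := mul_le_mul_of_nonneg_right hs (Nat.cast_nonneg k)
      linarith
    have h2 := mul_le_mul_of_nonneg_right h1 hD.le
    have h3 : (k:ℝ) * (Real.log (Real.log n) - Real.log (Real.log M))
        + (((M:ℝ)+1) * Real.log 3) * (Real.log n - Real.log M)
        ≤ σ * (Real.log n - Real.log M) := by
      calc (k:ℝ) * (Real.log (Real.log n) - Real.log (Real.log M))
          + (((M:ℝ)+1) * Real.log 3) * (Real.log n - Real.log M)
          = (((Real.log (Real.log n) - Real.log (Real.log M)) / (Real.log n - Real.log M)) * k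
            + ((M:ℝ)+1) * Real.log 3) * (Real.log n - Real.log M) := by
            field_simp
        _ ≤ σ * (Real.log n - Real.log M) := h2
    linarith
  refine hmain.trans (mul_le_mul_of_nonneg_left ?_ (by positivity))
  have hn0 : (0:ℝ) < n := by linarith
  have hdiv : (0:ℝ) < (M:ℝ)/n := div_pos (by linarith) hn0
  have hrw : ((n:ℝ)/M) ^ (-(((M:ℝ)+1) * Real.log 3))
      = ((M:ℝ)/n) ^ (((M:ℝ)+1) * Real.log 3) := by
    rw [Real.rpow_neg (by positivity), ← Real.inv_rpow (by positivity), inv_div]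
  rw [hrw]
  apply Real.rpow_le_rpow_of_exponent_ge hdiv (by
    rw [div_le_one hn0]; linarith)
  have h3 := log3_gt
  nlinarith

private lemma tsum_inv_sq_tail (N : ℕ) (hN : 2 ≤ N) :
    ∑' j : ℕ, (1:ℝ) / ((j:ℝ) + N)^2 ≤ 1 / ((N:ℝ) - 1) := by
  have hN1 : (1:ℝ) ≤ (N:ℝ) - 1 := by
    have : (2:ℝ) ≤ N := by exact_mod_cast hN
    linarith
  set f : ℕ → ℝ := fun j => 1 / ((j:ℝ) + N - 1) with hf
  have htel : HasSum (fun j => f j - f (j+1)) (1 / ((N:ℝ) - 1)) := by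
    have hnn : ∀ j, 0 ≤ f j - f (j+1) := by
      intro j
      have h1 : (0:ℝ) < (j:ℝ) + N - 1 := by push_cast; linarith
      have h2 : (0:ℝ) < ((j:ℕ)+1:ℕ) + (N:ℝ) - 1 := by push_cast; linarith
      simp only [hf]
      rw [sub_nonneg, div_le_div_iff₀ (by push_cast; linarith) h1]
      push_cast
      nlinarith
    rw [hasSum_iff_tendsto_nat_of_nonneg hnn]
    have hps : ∀ n, ∑ i ∈ Finset.range n, (f i - f (i+1)) = f 0 - f n :=
      fun n => Finset.sum_range_sub' f n
    simp only [hps]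
    have : Filter.Tendsto f Filter.atTop (nhds 0) := by
      simp only [hf]
      have := Filter.Tendsto.comp tendsto_inv_atTop_zero
        (Filter.tendsto_atTop_add_const_right Filter.atTop ((N:ℝ) - 1)
          tendsto_natCast_atTop_atTop)
      simpa [Function.comp_def, one_div, add_sub_assoc] using this
    have := (tendsto_const_nhds (x := f 0)).sub this
    simpa [hf] using this
  have hsum2 : Summable (fun j : ℕ => (1:ℝ) / ((j:ℝ) + N)^2) := by
    have h := (Real.summable_one_div_nat_pow (p := 2)).2 (by norm_num)
    have h2 := (summable_nat_add_iff N).2 h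
    apply h2.congr
    intro j
    push_cast
    ring
  refine (Summable.tsum_le_tsum ?_ hsum2 htel.summable).trans (le_of_eq htel.tsum_eq)
  intro j
  simp only [hf]
  have h1 : (0:ℝ) < (j:ℝ) + N - 1 := by push_cast; linarith
  have h2 : (0:ℝ) < (j:ℝ) + 1 + N - 1 := by push_cast; linarith
  rw [div_sub_div _ _ h1.ne' (by push_cast; linarith), div_le_div_iff₀ (by positivity)
    (by push_cast; nlinarith)]
  push_cast
  nlinarith

private lemma logMul_iterate_one (k n : ℕ) :
    (LSeries.logMul^[k] (1 : ℕ → ℂ)) n = (Complex.log n)^k := by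
  induction k with
  | zero => simp
  | succ m ih =>
    rw [Function.iterate_succ_apply', pow_succ]
    simp only [LSeries.logMul, ih]
    ring

private lemma summable_inv_sq_shift (N : ℕ) :
    Summable (fun j : ℕ => (1:ℝ) / ((j:ℝ) + N)^2) := by
  have h := (Real.summable_one_div_nat_pow (p := 2)).2 (by norm_num)
  have h2 := (summable_nat_add_iff N).2 h
  apply h2.congr
  intro j
  push_cast
  ring

private noncomputable def w (M n : ℕ) : ℝ :=
  if n < 2 ∨ n = M then 0
  else if n < M then ((n:ℝ)/M) ^ (13*(M:ℝ)/12)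
  else ((M:ℝ)/n) ^ (13*((M:ℝ)+1)/12)

private noncomputable def tailT (M : ℕ) : ℝ :=
  ((M:ℝ)/(2*(M:ℝ)+1)) ^ (13*((M:ℝ)+1)/12 - 2) * (M:ℝ)^2

set_option maxHeartbeats 2000000 in
private lemma numeric (M : ℕ) (hM₁ : 4 ≤ M) (hM₂ : M ≤ 10) :
    ∑ n ∈ Finset.range (2*M+1), w M n + tailT M / (2*(M:ℝ)) < 1 := by
  interval_cases M
  · rw [show 2*4+1 = 9 from rfl]
    simp only [Finset.sum_range_succ, Finset.sum_range_zero, w, tailT]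
    norm_num
    have t0 : ((1 / 2:ℝ)) ^ ((13 / 3:ℝ)) ≤ 497/10000 :=
      rpow_le_of_pow_le 13 3 (by norm_num) (by norm_num) (by norm_num) (by norm_num) (by norm_num)
    have t1 : ((3 / 4:ℝ)) ^ ((13 / 3:ℝ)) ≤ 23/80 :=
      rpow_le_of_pow_le 13 3 (by norm_num) (by norm_num) (by norm_num) (by norm_num) (by norm_num)
    have t2 : ((4 / 5:ℝ)) ^ ((65 / 12:ℝ)) ≤ 1493/5000 :=
      rpow_le_of_pow_le 65 12 (by norm_num) (by norm_num) (by norm_num) (by norm_num) (by norm_num)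
    have t3 : ((2 / 3:ℝ)) ^ ((65 / 12:ℝ)) ≤ 1113/10000 :=
      rpow_le_of_pow_le 65 12 (by norm_num) (by norm_num) (by norm_num) (by norm_num) (by norm_num)
    have t4 : ((4 / 7:ℝ)) ^ ((65 / 12:ℝ)) ≤ 483/10000 :=
      rpow_le_of_pow_le 65 12 (by norm_num) (by norm_num) (by norm_num) (by norm_num) (by norm_num)
    have t5 : ((1 / 2:ℝ)) ^ ((65 / 12:ℝ)) ≤ 47/2000 :=
      rpow_le_of_pow_le 65 12 (by norm_num) (by norm_num) (by norm_num) (by norm_num) (by norm_num)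
    have t6 : ((4 / 9:ℝ)) ^ ((41 / 12:ℝ)) ≤ 627/10000 :=
      rpow_le_of_pow_le 41 12 (by norm_num) (by norm_num) (by norm_num) (by norm_num) (by norm_num)
    linarith
  · rw [show 2*5+1 = 11 from rfl]
    simp only [Finset.sum_range_succ, Finset.sum_range_zero, w, tailT]
    norm_num
    have t0 : ((2 / 5:ℝ)) ^ ((65 / 12:ℝ)) ≤ 7/1000 :=
      rpow_le_of_pow_le 65 12 (by norm_num) (by norm_num) (by norm_num) (by norm_num) (by norm_num)
    have t1 : ((3 / 5:ℝ)) ^ ((65 / 12:ℝ)) ≤ 629/10000 :=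
      rpow_le_of_pow_le 65 12 (by norm_num) (by norm_num) (by norm_num) (by norm_num) (by norm_num)
    have t2 : ((4 / 5:ℝ)) ^ ((65 / 12:ℝ)) ≤ 1493/5000 :=
      rpow_le_of_pow_le 65 12 (by norm_num) (by norm_num) (by norm_num) (by norm_num) (by norm_num)
    have t3 : ((5 / 6:ℝ)) ^ ((13 / 2:ℝ)) ≤ 1529/5000 :=
      rpow_le_of_pow_le 13 2 (by norm_num) (by norm_num) (by norm_num) (by norm_num) (by norm_num)
    have t4 : ((5 / 7:ℝ)) ^ ((13 / 2:ℝ)) ≤ 1123/10000 :=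
      rpow_le_of_pow_le 13 2 (by norm_num) (by norm_num) (by norm_num) (by norm_num) (by norm_num)
    have t5 : ((5 / 8:ℝ)) ^ ((13 / 2:ℝ)) ≤ 59/1250 :=
      rpow_le_of_pow_le 13 2 (by norm_num) (by norm_num) (by norm_num) (by norm_num) (by norm_num)
    have t6 : ((5 / 9:ℝ)) ^ ((13 / 2:ℝ)) ≤ 11/500 :=
      rpow_le_of_pow_le 13 2 (by norm_num) (by norm_num) (by norm_num) (by norm_num) (by norm_num)
    have t7 : ((1 / 2:ℝ)) ^ ((13 / 2:ℝ)) ≤ 111/10000 :=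
      rpow_le_of_pow_le 13 2 (by norm_num) (by norm_num) (by norm_num) (by norm_num) (by norm_num)
    have t8 : ((5 / 11:ℝ)) ^ ((9 / 2:ℝ)) ≤ 18/625 :=
      rpow_le_of_pow_le 9 2 (by norm_num) (by norm_num) (by norm_num) (by norm_num) (by norm_num)
    linarith
  · rw [show 2*6+1 = 13 from rfl]
    simp only [Finset.sum_range_succ, Finset.sum_range_zero, w, tailT]
    norm_num
    have t0 : ((1 / 3:ℝ)) ^ ((13 / 2:ℝ)) ≤ 1/1250 :=
      rpow_le_of_pow_le 13 2 (by norm_num) (by norm_num) (by norm_num) (by norm_num) (by norm_num)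
    have t1 : ((1 / 2:ℝ)) ^ ((13 / 2:ℝ)) ≤ 111/10000 :=
      rpow_le_of_pow_le 13 2 (by norm_num) (by norm_num) (by norm_num) (by norm_num) (by norm_num)
    have t2 : ((2 / 3:ℝ)) ^ ((13 / 2:ℝ)) ≤ 717/10000 :=
      rpow_le_of_pow_le 13 2 (by norm_num) (by norm_num) (by norm_num) (by norm_num) (by norm_num)
    have t3 : ((5 / 6:ℝ)) ^ ((13 / 2:ℝ)) ≤ 1529/5000 :=
      rpow_le_of_pow_le 13 2 (by norm_num) (by norm_num) (by norm_num) (by norm_num) (by norm_num)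
    have t4 : ((6 / 7:ℝ)) ^ ((91 / 12:ℝ)) ≤ 3107/10000 :=
      rpow_le_of_pow_le 91 12 (by norm_num) (by norm_num) (by norm_num) (by norm_num) (by norm_num)
    have t5 : ((3 / 4:ℝ)) ^ ((91 / 12:ℝ)) ≤ 1129/10000 :=
      rpow_le_of_pow_le 91 12 (by norm_num) (by norm_num) (by norm_num) (by norm_num) (by norm_num)
    have t6 : ((2 / 3:ℝ)) ^ ((91 / 12:ℝ)) ≤ 231/5000 :=
      rpow_le_of_pow_le 91 12 (by norm_num) (by norm_num) (by norm_num) (by norm_num) (by norm_num)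
    have t7 : ((3 / 5:ℝ)) ^ ((91 / 12:ℝ)) ≤ 13/625 :=
      rpow_le_of_pow_le 91 12 (by norm_num) (by norm_num) (by norm_num) (by norm_num) (by norm_num)
    have t8 : ((6 / 11:ℝ)) ^ ((91 / 12:ℝ)) ≤ 101/10000 :=
      rpow_le_of_pow_le 91 12 (by norm_num) (by norm_num) (by norm_num) (by norm_num) (by norm_num)
    have t9 : ((1 / 2:ℝ)) ^ ((91 / 12:ℝ)) ≤ 53/10000 :=
      rpow_le_of_pow_le 91 12 (by norm_num) (by norm_num) (by norm_num) (by norm_num) (by norm_num)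
    have t10 : ((6 / 13:ℝ)) ^ ((67 / 12:ℝ)) ≤ 67/5000 :=
      rpow_le_of_pow_le 67 12 (by norm_num) (by norm_num) (by norm_num) (by norm_num) (by norm_num)
    linarith
  · rw [show 2*7+1 = 15 from rfl]
    simp only [Finset.sum_range_succ, Finset.sum_range_zero, w, tailT]
    norm_num
    have t0 : ((2 / 7:ℝ)) ^ ((91 / 12:ℝ)) ≤ 1/10000 :=
      rpow_le_of_pow_le 91 12 (by norm_num) (by norm_num) (by norm_num) (by norm_num) (by norm_num)
    have t1 : ((3 / 7:ℝ)) ^ ((91 / 12:ℝ)) ≤ 17/10000 :=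
      rpow_le_of_pow_le 91 12 (by norm_num) (by norm_num) (by norm_num) (by norm_num) (by norm_num)
    have t2 : ((4 / 7:ℝ)) ^ ((91 / 12:ℝ)) ≤ 9/625 :=
      rpow_le_of_pow_le 91 12 (by norm_num) (by norm_num) (by norm_num) (by norm_num) (by norm_num)
    have t3 : ((5 / 7:ℝ)) ^ ((91 / 12:ℝ)) ≤ 39/500 :=
      rpow_le_of_pow_le 91 12 (by norm_num) (by norm_num) (by norm_num) (by norm_num) (by norm_num)
    have t4 : ((6 / 7:ℝ)) ^ ((91 / 12:ℝ)) ≤ 3107/10000 :=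
      rpow_le_of_pow_le 91 12 (by norm_num) (by norm_num) (by norm_num) (by norm_num) (by norm_num)
    have t5 : ((7 / 8:ℝ)) ^ ((26 / 3:ℝ)) ≤ 393/1250 :=
      rpow_le_of_pow_le 26 3 (by norm_num) (by norm_num) (by norm_num) (by norm_num) (by norm_num)
    have t6 : ((7 / 9:ℝ)) ^ ((26 / 3:ℝ)) ≤ 1133/10000 :=
      rpow_le_of_pow_le 26 3 (by norm_num) (by norm_num) (by norm_num) (by norm_num) (by norm_num)
    have t7 : ((7 / 10:ℝ)) ^ ((26 / 3:ℝ)) ≤ 91/2000 :=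
      rpow_le_of_pow_le 26 3 (by norm_num) (by norm_num) (by norm_num) (by norm_num) (by norm_num)
    have t8 : ((7 / 11:ℝ)) ^ ((26 / 3:ℝ)) ≤ 199/10000 :=
      rpow_le_of_pow_le 26 3 (by norm_num) (by norm_num) (by norm_num) (by norm_num) (by norm_num)
    have t9 : ((7 / 12:ℝ)) ^ ((26 / 3:ℝ)) ≤ 47/5000 :=
      rpow_le_of_pow_le 26 3 (by norm_num) (by norm_num) (by norm_num) (by norm_num) (by norm_num)
    have t10 : ((7 / 13:ℝ)) ^ ((26 / 3:ℝ)) ≤ 47/10000 :=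
      rpow_le_of_pow_le 26 3 (by norm_num) (by norm_num) (by norm_num) (by norm_num) (by norm_num)
    have t11 : ((1 / 2:ℝ)) ^ ((26 / 3:ℝ)) ≤ 1/400 :=
      rpow_le_of_pow_le 26 3 (by norm_num) (by norm_num) (by norm_num) (by norm_num) (by norm_num)
    have t12 : ((7 / 15:ℝ)) ^ ((20 / 3:ℝ)) ≤ 63/10000 :=
      rpow_le_of_pow_le 20 3 (by norm_num) (by norm_num) (by norm_num) (by norm_num) (by norm_num)
    linarith
  · rw [show 2*8+1 = 17 from rfl]
    simp only [Finset.sum_range_succ, Finset.sum_range_zero, w, tailT]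
    norm_num
    have t0 : ((1 / 4:ℝ)) ^ ((26 / 3:ℝ)) ≤ 1/10000 :=
      rpow_le_of_pow_le 26 3 (by norm_num) (by norm_num) (by norm_num) (by norm_num) (by norm_num)
    have t1 : ((3 / 8:ℝ)) ^ ((26 / 3:ℝ)) ≤ 3/10000 :=
      rpow_le_of_pow_le 26 3 (by norm_num) (by norm_num) (by norm_num) (by norm_num) (by norm_num)
    have t2 : ((1 / 2:ℝ)) ^ ((26 / 3:ℝ)) ≤ 1/400 :=
      rpow_le_of_pow_le 26 3 (by norm_num) (by norm_num) (by norm_num) (by norm_num) (by norm_num)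
    have t3 : ((5 / 8:ℝ)) ^ ((26 / 3:ℝ)) ≤ 171/10000 :=
      rpow_le_of_pow_le 26 3 (by norm_num) (by norm_num) (by norm_num) (by norm_num) (by norm_num)
    have t4 : ((3 / 4:ℝ)) ^ ((26 / 3:ℝ)) ≤ 827/10000 :=
      rpow_le_of_pow_le 26 3 (by norm_num) (by norm_num) (by norm_num) (by norm_num) (by norm_num)
    have t5 : ((7 / 8:ℝ)) ^ ((26 / 3:ℝ)) ≤ 393/1250 :=
      rpow_le_of_pow_le 26 3 (by norm_num) (by norm_num) (by norm_num) (by norm_num) (by norm_num)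
    have t6 : ((8 / 9:ℝ)) ^ ((39 / 4:ℝ)) ≤ 793/2500 :=
      rpow_le_of_pow_le 39 4 (by norm_num) (by norm_num) (by norm_num) (by norm_num) (by norm_num)
    have t7 : ((4 / 5:ℝ)) ^ ((39 / 4:ℝ)) ≤ 71/625 :=
      rpow_le_of_pow_le 39 4 (by norm_num) (by norm_num) (by norm_num) (by norm_num) (by norm_num)
    have t8 : ((8 / 11:ℝ)) ^ ((39 / 4:ℝ)) ≤ 449/10000 :=
      rpow_le_of_pow_le 39 4 (by norm_num) (by norm_num) (by norm_num) (by norm_num) (by norm_num)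
    have t9 : ((2 / 3:ℝ)) ^ ((39 / 4:ℝ)) ≤ 12/625 :=
      rpow_le_of_pow_le 39 4 (by norm_num) (by norm_num) (by norm_num) (by norm_num) (by norm_num)
    have t10 : ((8 / 13:ℝ)) ^ ((39 / 4:ℝ)) ≤ 11/1250 :=
      rpow_le_of_pow_le 39 4 (by norm_num) (by norm_num) (by norm_num) (by norm_num) (by norm_num)
    have t11 : ((4 / 7:ℝ)) ^ ((39 / 4:ℝ)) ≤ 43/10000 :=
      rpow_le_of_pow_le 39 4 (by norm_num) (by norm_num) (by norm_num) (by norm_num) (by norm_num)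
    have t12 : ((8 / 15:ℝ)) ^ ((39 / 4:ℝ)) ≤ 11/5000 :=
      rpow_le_of_pow_le 39 4 (by norm_num) (by norm_num) (by norm_num) (by norm_num) (by norm_num)
    have t13 : ((1 / 2:ℝ)) ^ ((39 / 4:ℝ)) ≤ 3/2500 :=
      rpow_le_of_pow_le 39 4 (by norm_num) (by norm_num) (by norm_num) (by norm_num) (by norm_num)
    have t14 : ((8 / 17:ℝ)) ^ ((31 / 4:ℝ)) ≤ 3/1000 :=
      rpow_le_of_pow_le 31 4 (by norm_num) (by norm_num) (by norm_num) (by norm_num) (by norm_num)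
    linarith
  · rw [show 2*9+1 = 19 from rfl]
    simp only [Finset.sum_range_succ, Finset.sum_range_zero, w, tailT]
    norm_num
    have t0 : ((2 / 9:ℝ)) ^ ((39 / 4:ℝ)) ≤ 1/10000 :=
      rpow_le_of_pow_le 39 4 (by norm_num) (by norm_num) (by norm_num) (by norm_num) (by norm_num)
    have t1 : ((1 / 3:ℝ)) ^ ((39 / 4:ℝ)) ≤ 1/10000 :=
      rpow_le_of_pow_le 39 4 (by norm_num) (by norm_num) (by norm_num) (by norm_num) (by norm_num)
    have t2 : ((4 / 9:ℝ)) ^ ((39 / 4:ℝ)) ≤ 1/2500 :=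
      rpow_le_of_pow_le 39 4 (by norm_num) (by norm_num) (by norm_num) (by norm_num) (by norm_num)
    have t3 : ((5 / 9:ℝ)) ^ ((39 / 4:ℝ)) ≤ 33/10000 :=
      rpow_le_of_pow_le 39 4 (by norm_num) (by norm_num) (by norm_num) (by norm_num) (by norm_num)
    have t4 : ((2 / 3:ℝ)) ^ ((39 / 4:ℝ)) ≤ 12/625 :=
      rpow_le_of_pow_le 39 4 (by norm_num) (by norm_num) (by norm_num) (by norm_num) (by norm_num)
    have t5 : ((7 / 9:ℝ)) ^ ((39 / 4:ℝ)) ≤ 863/10000 :=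
      rpow_le_of_pow_le 39 4 (by norm_num) (by norm_num) (by norm_num) (by norm_num) (by norm_num)
    have t6 : ((8 / 9:ℝ)) ^ ((39 / 4:ℝ)) ≤ 793/2500 :=
      rpow_le_of_pow_le 39 4 (by norm_num) (by norm_num) (by norm_num) (by norm_num) (by norm_num)
    have t7 : ((9 / 10:ℝ)) ^ ((65 / 6:ℝ)) ≤ 1597/5000 :=
      rpow_le_of_pow_le 65 6 (by norm_num) (by norm_num) (by norm_num) (by norm_num) (by norm_num)
    have t8 : ((9 / 11:ℝ)) ^ ((65 / 6:ℝ)) ≤ 569/5000 :=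
      rpow_le_of_pow_le 65 6 (by norm_num) (by norm_num) (by norm_num) (by norm_num) (by norm_num)
    have t9 : ((3 / 4:ℝ)) ^ ((65 / 6:ℝ)) ≤ 111/2500 :=
      rpow_le_of_pow_le 65 6 (by norm_num) (by norm_num) (by norm_num) (by norm_num) (by norm_num)
    have t10 : ((9 / 13:ℝ)) ^ ((65 / 6:ℝ)) ≤ 187/10000 :=
      rpow_le_of_pow_le 65 6 (by norm_num) (by norm_num) (by norm_num) (by norm_num) (by norm_num)
    have t11 : ((9 / 14:ℝ)) ^ ((65 / 6:ℝ)) ≤ 21/2500 :=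
      rpow_le_of_pow_le 65 6 (by norm_num) (by norm_num) (by norm_num) (by norm_num) (by norm_num)
    have t12 : ((3 / 5:ℝ)) ^ ((65 / 6:ℝ)) ≤ 1/250 :=
      rpow_le_of_pow_le 65 6 (by norm_num) (by norm_num) (by norm_num) (by norm_num) (by norm_num)
    have t13 : ((9 / 16:ℝ)) ^ ((65 / 6:ℝ)) ≤ 1/500 :=
      rpow_le_of_pow_le 65 6 (by norm_num) (by norm_num) (by norm_num) (by norm_num) (by norm_num)
    have t14 : ((9 / 17:ℝ)) ^ ((65 / 6:ℝ)) ≤ 11/10000 :=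
      rpow_le_of_pow_le 65 6 (by norm_num) (by norm_num) (by norm_num) (by norm_num) (by norm_num)
    have t15 : ((1 / 2:ℝ)) ^ ((65 / 6:ℝ)) ≤ 3/5000 :=
      rpow_le_of_pow_le 65 6 (by norm_num) (by norm_num) (by norm_num) (by norm_num) (by norm_num)
    have t16 : ((9 / 19:ℝ)) ^ ((53 / 6:ℝ)) ≤ 7/5000 :=
      rpow_le_of_pow_le 53 6 (by norm_num) (by norm_num) (by norm_num) (by norm_num) (by norm_num)
    linarith
  · rw [show 2*10+1 = 21 from rfl]
    simp only [Finset.sum_range_succ, Finset.sum_range_zero, w, tailT]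
    norm_num
    have t0 : ((1 / 5:ℝ)) ^ ((65 / 6:ℝ)) ≤ 1/10000 :=
      rpow_le_of_pow_le 65 6 (by norm_num) (by norm_num) (by norm_num) (by norm_num) (by norm_num)
    have t1 : ((3 / 10:ℝ)) ^ ((65 / 6:ℝ)) ≤ 1/10000 :=
      rpow_le_of_pow_le 65 6 (by norm_num) (by norm_num) (by norm_num) (by norm_num) (by norm_num)
    have t2 : ((2 / 5:ℝ)) ^ ((65 / 6:ℝ)) ≤ 1/10000 :=
      rpow_le_of_pow_le 65 6 (by norm_num) (by norm_num) (by norm_num) (by norm_num) (by norm_num)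
    have t3 : ((1 / 2:ℝ)) ^ ((65 / 6:ℝ)) ≤ 3/5000 :=
      rpow_le_of_pow_le 65 6 (by norm_num) (by norm_num) (by norm_num) (by norm_num) (by norm_num)
    have t4 : ((3 / 5:ℝ)) ^ ((65 / 6:ℝ)) ≤ 1/250 :=
      rpow_le_of_pow_le 65 6 (by norm_num) (by norm_num) (by norm_num) (by norm_num) (by norm_num)
    have t5 : ((7 / 10:ℝ)) ^ ((65 / 6:ℝ)) ≤ 21/1000 :=
      rpow_le_of_pow_le 65 6 (by norm_num) (by norm_num) (by norm_num) (by norm_num) (by norm_num)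
    have t6 : ((4 / 5:ℝ)) ^ ((65 / 6:ℝ)) ≤ 223/2500 :=
      rpow_le_of_pow_le 65 6 (by norm_num) (by norm_num) (by norm_num) (by norm_num) (by norm_num)
    have t7 : ((9 / 10:ℝ)) ^ ((65 / 6:ℝ)) ≤ 1597/5000 :=
      rpow_le_of_pow_le 65 6 (by norm_num) (by norm_num) (by norm_num) (by norm_num) (by norm_num)
    have t8 : ((10 / 11:ℝ)) ^ ((143 / 12:ℝ)) ≤ 803/2500 :=
      rpow_le_of_pow_le 143 12 (by norm_num) (by norm_num) (by norm_num) (by norm_num) (by norm_num)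
    have t9 : ((5 / 6:ℝ)) ^ ((143 / 12:ℝ)) ≤ 1139/10000 :=
      rpow_le_of_pow_le 143 12 (by norm_num) (by norm_num) (by norm_num) (by norm_num) (by norm_num)
    have t10 : ((10 / 13:ℝ)) ^ ((143 / 12:ℝ)) ≤ 439/10000 :=
      rpow_le_of_pow_le 143 12 (by norm_num) (by norm_num) (by norm_num) (by norm_num) (by norm_num)
    have t11 : ((5 / 7:ℝ)) ^ ((143 / 12:ℝ)) ≤ 91/5000 :=
      rpow_le_of_pow_le 143 12 (by norm_num) (by norm_num) (by norm_num) (by norm_num) (by norm_num)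
    have t12 : ((2 / 3:ℝ)) ^ ((143 / 12:ℝ)) ≤ 1/125 :=
      rpow_le_of_pow_le 143 12 (by norm_num) (by norm_num) (by norm_num) (by norm_num) (by norm_num)
    have t13 : ((5 / 8:ℝ)) ^ ((143 / 12:ℝ)) ≤ 37/10000 :=
      rpow_le_of_pow_le 143 12 (by norm_num) (by norm_num) (by norm_num) (by norm_num) (by norm_num)
    have t14 : ((10 / 17:ℝ)) ^ ((143 / 12:ℝ)) ≤ 9/5000 :=
      rpow_le_of_pow_le 143 12 (by norm_num) (by norm_num) (by norm_num) (by norm_num) (by norm_num)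
    have t15 : ((5 / 9:ℝ)) ^ ((143 / 12:ℝ)) ≤ 1/1000 :=
      rpow_le_of_pow_le 143 12 (by norm_num) (by norm_num) (by norm_num) (by norm_num) (by norm_num)
    have t16 : ((10 / 19:ℝ)) ^ ((143 / 12:ℝ)) ≤ 1/2000 :=
      rpow_le_of_pow_le 143 12 (by norm_num) (by norm_num) (by norm_num) (by norm_num) (by norm_num)
    have t17 : ((1 / 2:ℝ)) ^ ((143 / 12:ℝ)) ≤ 3/10000 :=
      rpow_le_of_pow_le 143 12 (by norm_num) (by norm_num) (by norm_num) (by norm_num) (by norm_num)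
    have t18 : ((10 / 21:ℝ)) ^ ((119 / 12:ℝ)) ≤ 7/10000 :=
      rpow_le_of_pow_le 119 12 (by norm_num) (by norm_num) (by norm_num) (by norm_num) (by norm_num)
    linarith

set_option maxHeartbeats 1000000 in
/-- For every integer `M` with `4 ≤ M ≤ 10`, every positive integer `k`, and every
complex `s` with `q M * k + (M+1) log 3 ≤ Re s ≤ q (M-1) * k - M log 3`, the `k`-th
derivative of the Riemann zeta function does not vanish at `s`. -/
theorem zeta_deriv_ne_zero_M_four_to_ten (M : ℕ) (hM₁ : 4 ≤ M) (hM₂ : M ≤ 10)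
    (k : ℕ) (hk : 1 ≤ k) (s : ℂ)
    (h1 : q M * k + ((M : ℝ) + 1) * Real.log 3 ≤ s.re)
    (h2 : s.re ≤ q (M - 1) * k - (M : ℝ) * Real.log 3) :
    iteratedDeriv k riemannZeta s ≠ 0 := by
  have hl3 := log3_gt
  have hM0 : (0:ℝ) < M := by exact_mod_cast (by omega : 0 < M)
  have hM1 : (1:ℝ) < M := by exact_mod_cast (by omega : 1 < M)
  have hM4 : (4:ℝ) ≤ M := by exact_mod_cast hM₁
  have hqM : 0 ≤ q M := by
    have ha : Real.log (Real.log M / Real.log ((M:ℝ)+1)) ≤ 0 := by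
      apply Real.log_nonpos
      · exact div_nonneg (Real.log_nonneg (by linarith)) (Real.log_nonneg (by linarith))
      · rw [div_le_one (Real.log_pos (by linarith))]
        exact Real.log_le_log (by linarith) (by linarith)
    have hb : Real.log ((M:ℝ) / ((M:ℝ)+1)) ≤ 0 := by
      apply Real.log_nonpos
      · positivity
      · rw [div_le_one (by linarith)]
        linarith
    have := div_nonneg (neg_nonneg.2 ha) (neg_nonneg.2 hb)
    rwa [neg_div_neg_eq] at this
  have hσ1 : 1 < s.re := by
    have hk0 : (0:ℝ) ≤ q M * k := mul_nonneg hqM (Nat.cast_nonneg k)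
    nlinarith
  have habs : abscissaOfAbsConv 1 < s.re := by
    rw [LSeries.abscissaOfAbsConv_one]
    exact_mod_cast hσ1
  have hev : LSeries 1 =ᶠ[nhds s] riemannZeta := by
    filter_upwards [IsOpen.mem_nhds (isOpen_lt continuous_const Complex.continuous_re) hσ1]
      with z hz
    exact LSeries_one_eq_riemannZeta hz
  rw [← hev.iteratedDeriv_eq k, LSeries_iteratedDeriv k habs]
  apply mul_ne_zero (pow_ne_zero k (by norm_num))
  set F := LSeries.logMul^[k] (1 : ℕ → ℂ) with hF
  have hsumm : LSeriesSummable F s :=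
    LSeriesSummable_of_abscissaOfAbsConv_lt_re
      (by rw [hF, LSeries.absicssaOfAbsConv_logPowMul]; exact habs)
  have hnorm : ∀ n : ℕ, 1 ≤ n → ‖LSeries.term F s n‖ = (Real.log n)^k / (n:ℝ) ^ s.re := by
    intro n hn
    rw [LSeries.norm_term_eq, if_neg (by omega)]
    congr 1
    rw [hF, logMul_iterate_one, norm_pow, ← Complex.natCast_log, Complex.norm_real,
      Real.norm_eq_abs, abs_of_nonneg (Real.log_nonneg (by exact_mod_cast hn : (1:ℝ) ≤ (n:ℝ)))]
  set A := (Real.log M)^k / (M:ℝ) ^ s.re with hA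
  have hA0 : 0 < A := by
    apply div_pos (pow_pos (Real.log_pos hM1) k) (Real.rpow_pos_of_pos hM0 _)
  have hbound : ∀ n : ℕ, ‖if n = M then 0 else LSeries.term F s n‖ ≤ A * w M n := by
    intro n
    by_cases hnM : n = M
    · rw [if_pos hnM, norm_zero, w, if_pos (Or.inr hnM)]
      simp
    rw [if_neg hnM]
    by_cases hn2 : n < 2
    · interval_cases n
      · rw [LSeries.term_zero, norm_zero, w, if_pos (Or.inl (by norm_num))]
        simp
      · rw [hnorm 1 le_rfl, w, if_pos (Or.inl (by norm_num))]
        simp [Real.log_one, zero_pow (by omega : k ≠ 0)]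
    push_neg at hn2
    rcases lt_or_gt_of_ne hnM with hlt | hgt
    · rw [hnorm n (by omega), w, if_neg (by push_neg; exact ⟨by omega, hnM⟩), if_pos hlt]
      exact dom_left hM₁ hn2 hlt h2
    · rw [hnorm n (by omega), w, if_neg (by push_neg; exact ⟨by omega, hnM⟩),
        if_neg (by omega)]
      exact dom_right hM₁ hgt h1
  have hgs : Summable (fun n => ‖if n = M then 0 else LSeries.term F s n‖) := by
    apply Summable.of_nonneg_of_le (fun n => norm_nonneg _) (fun n => ?_)
      (summable_norm_iff.mpr hsumm)
    by_cases hnM : n = M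
    · rw [if_pos hnM, norm_zero]; exact norm_nonneg _
    · rw [if_neg hnM]
  -- tail bound
  set N := 2*M+1 with hN
  have hNr : ((N:ℕ):ℝ) = 2*(M:ℝ)+1 := by rw [hN]; push_cast; ring
  have htail : ∑' j : ℕ, ‖if (j + N) = M then 0 else LSeries.term F s (j + N)‖
      ≤ A * (tailT M / (2*(M:ℝ))) := by
    have hc2 : (0:ℝ) ≤ 13*((M:ℝ)+1)/12 - 2 := by nlinarith
    have hstep : ∀ j : ℕ, ‖if (j + N) = M then 0 else LSeries.term F s (j + N)‖
        ≤ (A * tailT M) * ((1:ℝ) / ((j:ℝ) + N)^2) := by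
      intro j
      refine (hbound (j+N)).trans ?_
      have hjN : (0:ℝ) < (j:ℝ) + N := by
        have : (0:ℝ) ≤ (j:ℝ) := Nat.cast_nonneg j
        rw [hNr]; linarith
      have hx0 : (0:ℝ) < (M:ℝ)/((j:ℝ)+N) := div_pos hM0 hjN
      have hwj : w M (j+N) = ((M:ℝ)/((j:ℝ)+N)) ^ (13*((M:ℝ)+1)/12) := by
        rw [w, if_neg (by push_neg; constructor <;> omega), if_neg (by omega)]
        push_cast
        ring_nf
      rw [hwj, mul_assoc]
      apply mul_le_mul_of_nonneg_left ?_ hA0.le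
      rw [show 13*((M:ℝ)+1)/12 = (13*((M:ℝ)+1)/12 - 2) + 2 by ring,
        Real.rpow_add hx0, Real.rpow_two]
      rw [tailT]
      calc ((M:ℝ)/((j:ℝ)+N)) ^ (13*((M:ℝ)+1)/12 - 2) * ((M:ℝ)/((j:ℝ)+N))^2
          ≤ ((M:ℝ)/(2*(M:ℝ)+1)) ^ (13*((M:ℝ)+1)/12 - 2) * ((M:ℝ)/((j:ℝ)+N))^2 := by
            apply mul_le_mul_of_nonneg_right ?_ (by positivity)
            apply Real.rpow_le_rpow hx0.le ?_ hc2
            apply div_le_div_of_nonneg_left hM0.le (by linarith) ?_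
            rw [hNr]
            have : (0:ℝ) ≤ (j:ℝ) := Nat.cast_nonneg j
            linarith
        _ = ((M:ℝ)/(2*(M:ℝ)+1)) ^ (13*((M:ℝ)+1)/12 - 2) * (M:ℝ)^2 * (1/((j:ℝ)+N)^2) := by
            field_simp
    calc ∑' j : ℕ, ‖if (j + N) = M then 0 else LSeries.term F s (j + N)‖
        ≤ ∑' j : ℕ, (A * tailT M) * ((1:ℝ) / ((j:ℝ) + N)^2) := by
          exact Summable.tsum_le_tsum hstep ((summable_nat_add_iff N).2 hgs)
            ((summable_inv_sq_shift N).mul_left _)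
      _ = (A * tailT M) * ∑' j : ℕ, (1:ℝ) / ((j:ℝ) + N)^2 := tsum_mul_left
      _ ≤ (A * tailT M) * (1 / ((N:ℝ) - 1)) := by
          apply mul_le_mul_of_nonneg_left (tsum_inv_sq_tail N (by omega)) ?_
          have htT : 0 ≤ tailT M := by
            rw [tailT]; positivity
          exact mul_nonneg hA0.le htT
      _ = A * (tailT M / (2*(M:ℝ))) := by
          rw [hNr]
          field_simp
          ring
  have hfin : ∑ n ∈ Finset.range N, ‖if n = M then 0 else LSeries.term F s n‖
      ≤ A * ∑ n ∈ Finset.range N, w M n := by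
    rw [Finset.mul_sum]
    exact Finset.sum_le_sum (fun n _ => hbound n)
  have key : ∑' n : ℕ, ‖if n = M then 0 else LSeries.term F s n‖ < A := by
    rw [← hgs.sum_add_tsum_nat_add N]
    calc ∑ n ∈ Finset.range N, ‖if n = M then 0 else LSeries.term F s n‖
          + ∑' j : ℕ, ‖if (j + N) = M then 0 else LSeries.term F s (j + N)‖
        ≤ A * ∑ n ∈ Finset.range N, w M n + A * (tailT M / (2*(M:ℝ))) :=
          add_le_add hfin htail
      _ = A * (∑ n ∈ Finset.range N, w M n + tailT M / (2*(M:ℝ))) := by ring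
      _ < A * 1 := by
          apply mul_lt_mul_of_pos_left (numeric M hM₁ hM₂) hA0
      _ = A := mul_one A
  intro h0
  have hsplit := Summable.tsum_eq_add_tsum_ite hsumm M
  have hLS : LSeries F s = 0 := h0
  rw [LSeries] at hLS
  rw [hLS] at hsplit
  have hTM : LSeries.term F s M = - ∑' n : ℕ, (if n = M then 0 else LSeries.term F s n) := by
    linear_combination -hsplit
  have hcontr : ‖LSeries.term F s M‖ ≤ ∑' n : ℕ, ‖if n = M then 0 else LSeries.term F s n‖ := by
    rw [hTM, norm_neg]
    exact norm_tsum_le_tsum_norm hgs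
  rw [hnorm M (by omega)] at hcontr
  exact absurd hcontr (not_le.mpr key)
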